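/- In an abelian p-group of type λ, the number of cyclic subgroups of order p^r (for r ≥ 1) is (p^{λ'_1+...+λ'_r} - p^{λ'_1+...+λ'_{r-1}})/(p^r - p^{r-1}). -/

import Mathlib

/-- `(x)_m` q-Pochhammer style product `∏_{j=1}^m (1 - p^{-j})`. -/
noncomputable def qPoch (p : ℝ) (m : ℕ) : ℝ := ∏ j ∈ Finset.range m, (1 - p⁻¹ ^ (j + 1))

/-- The conjugate partition: `conjPart λ j = λ'_j = #{parts of λ that are ≥ j}`. -/
def conjPart {n : ℕ} (lam : n.Partition) (j : ℕ) : ℕ :=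
  (lam.parts.filter (fun a => j ≤ a)).card

/-- The quantity `p^{Σ_i (λ'_i)²} · Π_i (1/p)_{m_i(λ)}`. -/
noncomputable def partitionWeight (p : ℝ) {n : ℕ} (lam : n.Partition) : ℝ :=
  p ^ (∑ i ∈ Finset.range n, (conjPart lam (i + 1)) ^ 2) *
    ∏ i ∈ Finset.range n, qPoch p (lam.parts.count (i + 1))

/-- The abelian `p`-group of type `λ`: `⊕ᵢ ℤ/p^{λᵢ}ℤ`. -/
abbrev GroupOfType (p : ℕ) {n : ℕ} (lam : n.Partition) : Type :=
  ∀ i : Fin lam.parts.toList.length, ZMod (p ^ lam.parts.toList.get i)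

open Finset AddSubgroup

/-- Cast between `ZMod` of equal moduli. -/
def zmodCongrAdd {a b : ℕ} (h : a = b) : ZMod a ≃+ ZMod b := by subst h; exact AddEquiv.refl _

section CountGen

variable {G : Type*} [AddCommGroup G] [Fintype G]

instance isAddCyclic_zmultiples (x : G) : IsAddCyclic (zmultiples x) := by
  refine ⟨⟨x, mem_zmultiples x⟩, fun a => ?_⟩
  obtain ⟨k, hk⟩ := a.2
  exact ⟨k, Subtype.ext (by simpa using hk)⟩

lemma zmultiples_eq_of_mem {m : ℕ} {A : AddSubgroup G} (hA : Nat.card A = m)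
    {x : G} (hx : x ∈ A) (hord : addOrderOf x = m) : zmultiples x = A := by
  refine AddSubgroup.eq_of_le_of_card_ge ((zmultiples_le).2 hx) ?_
  rw [Nat.card_zmultiples, hord, hA]

/-- An isomorphism from `zmultiples x` to `ZMod m` when `x` has order `m`. -/
noncomputable def zmultiplesAddEquiv {x : G} {m : ℕ} (h : addOrderOf x = m) :
    (zmultiples x) ≃+ ZMod m :=
  (zmodAddCyclicAddEquiv inferInstance).symm.trans
    (zmodCongrAdd (show Nat.card (zmultiples x) = m by rw [Nat.card_zmultiples, h]))

omit [Fintype G] in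
lemma card_of_iso {m : ℕ} {A : AddSubgroup G} (e : A ≃+ ZMod m) : Nat.card A = m := by
  rw [Nat.card_congr e.toEquiv, Nat.card_zmod]

lemma exists_gen_of_iso {m : ℕ} {A : AddSubgroup G} (e : A ≃+ ZMod m) :
    ∃ x : G, x ∈ A ∧ addOrderOf x = m ∧ zmultiples x = A := by
  refine ⟨(e.symm 1 : A), (e.symm 1).2, ?_, ?_⟩
  · rw [AddSubgroup.addOrderOf_coe, AddEquiv.addOrderOf_eq, ZMod.addOrderOf_one]
  · refine zmultiples_eq_of_mem (card_of_iso e) (e.symm 1).2 ?_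
    rw [AddSubgroup.addOrderOf_coe, AddEquiv.addOrderOf_eq, ZMod.addOrderOf_one]

/-- The number of subgroups isomorphic to `ZMod m` times `φ(m)` equals the number of
elements of order `m`. -/
lemma card_iso_subgroups_mul_totient (m : ℕ) (hm : m ≠ 0) :
    Nat.card {A : AddSubgroup G // Nonempty (A ≃+ ZMod m)} * m.totient
      = Nat.card {x : G // addOrderOf x = m} := by
  classical
  haveI : NeZero m := ⟨hm⟩
  rw [Nat.card_eq_fintype_card (α := {x : G // addOrderOf x = m}), Fintype.card_subtype]
  set s : Finset G := Finset.univ.filter fun x : G => addOrderOf x = m with hs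
  set f : G → AddSubgroup G := fun x => zmultiples x with hf
  set t : Finset (AddSubgroup G) := s.image f with ht
  have key1 : ∀ A : AddSubgroup G, A ∈ t ↔ Nonempty (A ≃+ ZMod m) := by
    intro A
    constructor
    · intro hA
      obtain ⟨x, hx, rfl⟩ := Finset.mem_image.1 hA
      have hord : addOrderOf x = m := (Finset.mem_filter.1 hx).2
      exact ⟨zmultiplesAddEquiv hord⟩
    · rintro ⟨e⟩
      obtain ⟨x, hxA, hord, hzm⟩ := exists_gen_of_iso e
      exact Finset.mem_image.2 ⟨x, Finset.mem_filter.2 ⟨Finset.mem_univ _, hord⟩, hzm⟩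
  have hcardT : Nat.card {A : AddSubgroup G // Nonempty (A ≃+ ZMod m)} = t.card := by
    rw [← Nat.card_eq_finsetCard]
    exact Nat.card_congr (Equiv.subtypeEquivRight fun A => (key1 A).symm)
  have hfib : ∀ A ∈ t, (s.filter fun x => f x = A).card = m.totient := by
    intro A hA
    obtain ⟨e⟩ := (key1 A).1 hA
    have hcA : Nat.card A = m := card_of_iso e
    have hset : (s.filter fun x => f x = A)
        = Finset.univ.filter (fun x : G => x ∈ A ∧ addOrderOf x = m) := by
      ext x
      simp only [Finset.mem_filter, Finset.mem_univ, true_and, hs, hf]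
      constructor
      · rintro ⟨h1, h2⟩
        exact ⟨h2 ▸ mem_zmultiples x, h1⟩
      · rintro ⟨h1, h2⟩
        exact ⟨h2, zmultiples_eq_of_mem hcA h1 h2⟩
    rw [hset]
    have e1 : {x : G // x ∈ A ∧ addOrderOf x = m} ≃ {a : A // addOrderOf a = m} :=
      { toFun := fun x => ⟨⟨x.1, x.2.1⟩, by
          rw [← AddSubgroup.addOrderOf_coe]; exact x.2.2⟩
        invFun := fun a => ⟨(a.1 : G), a.1.2, by
          rw [AddSubgroup.addOrderOf_coe]; exact a.2⟩
        left_inv := fun x => rfl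
        right_inv := fun a => rfl }
    have e2 : {a : A // addOrderOf a = m} ≃ {b : ZMod m // addOrderOf b = m} :=
      Equiv.subtypeEquiv e.toEquiv fun a => by
        rw [show e.toEquiv a = e a from rfl, AddEquiv.addOrderOf_eq]
    have hcc : (Finset.univ.filter (fun x : G => x ∈ A ∧ addOrderOf x = m)).card
        = Fintype.card {b : ZMod m // addOrderOf b = m} := by
      rw [Fintype.card_congr (e1.trans e2).symm, Fintype.card_subtype]
    rw [hcc, Fintype.card_subtype]
    have hdvd : m ∣ Fintype.card (ZMod m) := by rw [ZMod.card]
    simpa using IsAddCyclic.card_addOrderOf_eq_totient (α := ZMod m) hdvd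
  rw [hcardT]
  rw [Finset.card_eq_sum_card_fiberwise (fun x hx => Finset.mem_image_of_mem f hx)]
  rw [Finset.sum_congr rfl hfib, Finset.sum_const, smul_eq_mul]

lemma card_addOrderOf_eq_prime_pow {p : ℕ} (hp : p.Prime) {r : ℕ} (hr : 1 ≤ r) :
    Nat.card {x : G // addOrderOf x = p ^ r}
      = Nat.card {x : G // p ^ r • x = 0} - Nat.card {x : G // p ^ (r - 1) • x = 0} := by
  classical
  simp only [Nat.card_eq_fintype_card, Fintype.card_subtype]
  have hsub : (Finset.univ.filter fun x : G => p ^ (r - 1) • x = 0)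
      ⊆ (Finset.univ.filter fun x : G => p ^ r • x = 0) := by
    intro x hx
    simp only [Finset.mem_filter, Finset.mem_univ, true_and] at hx ⊢
    have h1 : addOrderOf x ∣ p ^ (r - 1) := addOrderOf_dvd_iff_nsmul_eq_zero.2 hx
    exact addOrderOf_dvd_iff_nsmul_eq_zero.1 (h1.trans (pow_dvd_pow p (Nat.sub_le r 1)))
  rw [← Finset.card_sdiff_of_subset hsub]
  congr 1
  ext x
  simp only [Finset.mem_sdiff, Finset.mem_filter, Finset.mem_univ, true_and]
  constructor
  · intro h
    refine ⟨addOrderOf_dvd_iff_nsmul_eq_zero.1 (h ▸ dvd_refl _), fun hc => ?_⟩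
    have h1 : p ^ r ∣ p ^ (r - 1) := h ▸ addOrderOf_dvd_iff_nsmul_eq_zero.2 hc
    have h2 : p ^ (r - 1) < p ^ r := Nat.pow_lt_pow_right hp.one_lt (by omega)
    exact absurd (Nat.le_of_dvd (Nat.pos_of_ne_zero (pow_ne_zero _ hp.pos.ne')) h1) (not_le.2 h2)
  · rintro ⟨h1, h2⟩
    obtain ⟨k, hk, hord⟩ := (Nat.dvd_prime_pow hp).1 (addOrderOf_dvd_iff_nsmul_eq_zero.2 h1)
    have hk' : k = r := by
      by_contra hne
      have hkr : k ≤ r - 1 := by omega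
      exact h2 (addOrderOf_dvd_iff_nsmul_eq_zero.1 (hord ▸ pow_dvd_pow p hkr))
    rw [hord, hk']

end CountGen

lemma card_nsmul_eq_zero_zmod {m d : ℕ} [NeZero m] (hd : d ∣ m) :
    Nat.card {x : ZMod m // d • x = 0} = d := by
  classical
  rw [Nat.card_eq_fintype_card, Fintype.card_subtype]
  have hd0 : d ≠ 0 := by
    rintro rfl
    exact NeZero.ne m (Nat.eq_zero_of_zero_dvd hd)
  have hstep : (Finset.univ.filter fun x : ZMod m => d • x = 0)
      = Finset.univ.filter fun x : ZMod m => addOrderOf x ∣ d := by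
    ext x; simp [addOrderOf_dvd_iff_nsmul_eq_zero]
  rw [hstep]
  have h2 : (Finset.univ.filter fun x : ZMod m => addOrderOf x ∣ d).card
      = ∑ e ∈ d.divisors, (Finset.univ.filter fun x : ZMod m => addOrderOf x = e).card := by
    rw [Finset.card_eq_sum_card_fiberwise
      (f := fun x : ZMod m => addOrderOf x) (t := d.divisors) ?_]
    · apply Finset.sum_congr rfl
      intro e he
      congr 1
      ext x
      simp only [Finset.mem_filter, Finset.mem_univ, true_and]
      constructor
      · rintro ⟨h1, h2⟩; exact h2
      · intro h; exact ⟨h ▸ Nat.dvd_of_mem_divisors he, h⟩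
    · intro x hx
      simp only [Finset.coe_filter, Finset.mem_univ, true_and, Set.mem_setOf_eq] at hx
      exact Nat.mem_divisors.2 ⟨hx, hd0⟩
  rw [h2]
  have h3 : ∀ e ∈ d.divisors,
      (Finset.univ.filter fun x : ZMod m => addOrderOf x = e).card = e.totient := by
    intro e he
    have hdvd : e ∣ Fintype.card (ZMod m) := by
      rw [ZMod.card]; exact (Nat.dvd_of_mem_divisors he).trans hd
    simpa using IsAddCyclic.card_addOrderOf_eq_totient (α := ZMod m) hdvd
  rw [Finset.sum_congr rfl h3, Nat.sum_totient]

lemma card_nsmul_eq_zero_zmod_pp {p : ℕ} (hp : p.Prime) (s v : ℕ) :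
    Nat.card {x : ZMod (p ^ v) // p ^ s • x = 0} = p ^ min s v := by
  haveI : NeZero (p ^ v) := ⟨pow_ne_zero _ hp.pos.ne'⟩
  have hpu : ¬IsUnit p := by simp [Nat.isUnit_iff, hp.ne_one]
  have hstep : ∀ x : ZMod (p ^ v), (p ^ s • x = 0) ↔ (p ^ min s v • x = 0) := by
    intro x
    have hcd : addOrderOf x ∣ p ^ v := by
      have := addOrderOf_dvd_card (x := x)
      rwa [ZMod.card] at this
    obtain ⟨k, hk, hord⟩ := (Nat.dvd_prime_pow hp).1 hcd
    rw [← addOrderOf_dvd_iff_nsmul_eq_zero, ← addOrderOf_dvd_iff_nsmul_eq_zero, hord,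
      pow_dvd_pow_iff hp.pos.ne' hpu, pow_dvd_pow_iff hp.pos.ne' hpu]
    omega
  rw [Nat.card_congr (Equiv.subtypeEquivRight hstep),
    card_nsmul_eq_zero_zmod (pow_dvd_pow p (min_le_right s v))]

lemma sum_range_card_filter_le (M : Multiset ℕ) (s : ℕ) :
    ∑ j ∈ Finset.range s, (M.filter (fun a => j + 1 ≤ a)).card
      = (M.map (fun a => min s a)).sum := by
  induction M using Multiset.induction_on with
  | empty => simp
  | cons a M ih =>
    simp only [Multiset.filter_cons, Multiset.map_cons, Multiset.sum_cons,
      Multiset.card_add, Finset.sum_add_distrib, ih]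
    congr 1
    simp only [apply_ite Multiset.card, Multiset.card_singleton, Multiset.card_zero]
    rw [← Finset.card_filter]
    have hr : Finset.filter (fun j => j + 1 ≤ a) (Finset.range s) = Finset.range (min s a) := by
      ext j
      simp only [Finset.mem_filter, Finset.mem_range, lt_min_iff]
      omega
    rw [hr, Finset.card_range]

lemma list_sum_map_get {α β : Type*} [AddCommMonoid β] (l : List α) (f : α → β) :
    (l.map f).sum = ∑ i : Fin l.length, f (l.get i) := by
  rw [← List.ofFn_getElem_eq_map, List.sum_ofFn]
  rfl

theorem card_cyclic_subgroups (p : ℕ) (hp : p.Prime) {n : ℕ} (lam : n.Partition)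
    (r : ℕ) (hr : 1 ≤ r) :
    Nat.card {A : AddSubgroup (GroupOfType p lam) // Nonempty (A ≃+ ZMod (p ^ r))}
        * (p ^ r - p ^ (r - 1))
      = p ^ (∑ j ∈ Finset.range r, conjPart lam (j + 1))
        - p ^ (∑ j ∈ Finset.range (r - 1), conjPart lam (j + 1)) := by
  classical
  haveI : ∀ i : Fin lam.parts.toList.length, NeZero (p ^ lam.parts.toList.get i) :=
    fun i => ⟨pow_ne_zero _ hp.pos.ne'⟩
  have hcount : ∀ s : ℕ,
      Nat.card {x : GroupOfType p lam // p ^ s • x = 0}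
        = p ^ (∑ j ∈ Finset.range s, conjPart lam (j + 1)) := by
    intro s
    have e1 : {x : GroupOfType p lam // p ^ s • x = 0}
        ≃ ∀ i : Fin lam.parts.toList.length,
            {y : ZMod (p ^ lam.parts.toList.get i) // p ^ s • y = 0} := by
      refine (Equiv.subtypeEquivRight fun x => ?_).trans (Equiv.subtypePiEquivPi)
      constructor
      · intro h i; rw [← Pi.smul_apply, h]; rfl
      · intro h; funext i; exact h i
    rw [Nat.card_congr e1, Nat.card_pi]
    have e2 : ∀ i : Fin lam.parts.toList.length,
        Nat.card {y : ZMod (p ^ lam.parts.toList.get i) // p ^ s • y = 0}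
          = p ^ min s (lam.parts.toList.get i) := fun i => card_nsmul_eq_zero_zmod_pp hp s _
    simp only [e2]
    rw [Finset.prod_pow_eq_pow_sum]
    congr 1
    simp only [conjPart]
    rw [sum_range_card_filter_le lam.parts s]
    conv_rhs => rw [← lam.parts.coe_toList]
    rw [Multiset.map_coe, Multiset.sum_coe, list_sum_map_get]
  have htot : (p ^ r).totient = p ^ r - p ^ (r - 1) := by
    rw [Nat.totient_prime_pow hp (by omega)]
    have hpr : p ^ r = p ^ (r - 1) * p := by
      rw [← pow_succ]; congr 1; omega
    rw [hpr, Nat.mul_sub, Nat.mul_one]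
  rw [← htot, card_iso_subgroups_mul_totient (p ^ r) (pow_ne_zero _ hp.pos.ne'),
    card_addOrderOf_eq_prime_pow hp hr, hcount, hcount]
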